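/- Maximizer of a linear functional over the Bures–Wasserstein ball around the identity: Let G be a nonzero real symmetric positive semidefinite d×d matrix, let ρ > 0, and let γ* > λ_max(G) be the unique solution of Tr[((I − γ⁻¹G)⁻¹ − I)²] = ρ². Set M* := (I − γ*⁻¹G)⁻². Then M* is symmetric positive definite, Tr(M* − 2√M* + I) = ρ², and for every real symmetric M ⪰ 0 with Tr(M − 2√M + I) ≤ ρ² one has Tr(G M) ≤ Tr(G M*). -/

import Mathlib

open Matrix

noncomputable section

open scoped Classical

namespace StmtAux

variable {n : Type*} [Fintype n] [DecidableEq n]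

lemma trace_nonneg {M : Matrix n n ℝ} (h : M.PosSemidef) : 0 ≤ M.trace := by
  exact h.trace_nonneg

lemma posDef_smul {M : Matrix n n ℝ} (h : M.PosDef) {c : ℝ} (hc : 0 < c) :
    (c • M).PosDef := by
  exact h.smul hc

open scoped MatrixOrder in
lemma trace_smul_one_sub_posSemidef {G : Matrix n n ℝ} (hG : G.PosSemidef) :
    (G.trace • (1 : Matrix n n ℝ) - G).PosSemidef := by
  set L := CFC.sqrt G with hL
  have hLL : L * L = G := CFC.sqrt_mul_sqrt_self G hG.nonneg
  have hLsymm : Lᵀ = L := by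
    have := (CFC.sqrt_nonneg G).posSemidef.1
    rwa [Matrix.IsHermitian, conjTranspose_eq_transpose_of_trivial] at this
  have quad : ∀ x : n → ℝ, star x ⬝ᵥ G *ᵥ x = (L *ᵥ x) ⬝ᵥ (L *ᵥ x) := by
    intro x
    rw [star_trivial, ← hLL, ← Matrix.mulVec_mulVec, dotProduct_mulVec]
    congr 1
    nth_rewrite 1 [← hLsymm]
    exact vecMul_transpose L x
  have htr : G.trace = ∑ i, ∑ j, (L i j) ^ 2 := by
    rw [← hLL, Matrix.trace]
    refine Finset.sum_congr rfl fun i _ => ?_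
    simp only [Matrix.diag, Matrix.mul_apply]
    refine Finset.sum_congr rfl fun j _ => ?_
    rw [sq]
    congr 1
    exact congrFun (congrFun hLsymm i) j
  refine Matrix.PosSemidef.of_dotProduct_mulVec_nonneg ?_ fun x => ?_
  · unfold Matrix.IsHermitian
    rw [conjTranspose_sub, conjTranspose_smul, hG.1.eq, conjTranspose_one]
    simp
  · rw [sub_mulVec, dotProduct_sub, smul_mulVec, one_mulVec, dotProduct_smul, quad]
    rw [sub_nonneg, star_trivial]
    have key : ∀ i, ((L *ᵥ x) i) ^ 2 ≤ (∑ j, (L i j) ^ 2) * (∑ j, (x j) ^ 2) := by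
      intro i
      simpa [Matrix.mulVec, dotProduct] using
        Finset.sum_mul_sq_le_sq_mul_sq Finset.univ (fun j => L i j) x
    calc (L *ᵥ x) ⬝ᵥ (L *ᵥ x) = ∑ i, ((L *ᵥ x) i) ^ 2 := by
          simp [dotProduct, sq]
      _ ≤ ∑ i, (∑ j, (L i j) ^ 2) * (∑ j, (x j) ^ 2) := Finset.sum_le_sum fun i _ => key i
      _ = G.trace • (x ⬝ᵥ x) := by
          rw [← Finset.sum_mul, htr, smul_eq_mul]
          congr 1
          simp [dotProduct, sq]

end StmtAux

/-- The positive semidefinite square root of a positive semidefinite real symmetric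
matrix (junk value `0` if the matrix is not positive semidefinite). -/
def psdSqrt {n : Type*} [Fintype n] [DecidableEq n] (A : Matrix n n ℝ) : Matrix n n ℝ :=
  if h : A.PosSemidef then
    h.1.eigenvectorUnitary.1 * diagonal ((√·) ∘ h.1.eigenvalues) *
      (star h.1.eigenvectorUnitary : Matrix n n ℝ)
  else 0

namespace StmtAux

open scoped MatrixOrder in
lemma psdSqrt_eq {n : Type*} [Fintype n] [DecidableEq n] {A : Matrix n n ℝ}
    (hA : A.PosSemidef) : psdSqrt A = CFC.sqrt A := by
  rw [psdSqrt, dif_pos hA, CFC.sqrt_eq_cfc, cfc_nnreal_eq_real _ A hA.nonneg, hA.1.cfc_eq]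
  simp only [IsHermitian.cfc, Unitary.conjStarAlgAut_apply, Real.coe_sqrt, Real.coe_toNNReal']
  congr 3
  ext i
  simp [Real.sqrt_eq_zero', hA.eigenvalues_nonneg i]
  done

open scoped MatrixOrder in
lemma psdSqrt_psd {n : Type*} [Fintype n] [DecidableEq n] {A : Matrix n n ℝ}
    (hA : A.PosSemidef) : (psdSqrt A).PosSemidef := by
  rw [psdSqrt_eq hA]; exact (CFC.sqrt_nonneg A).posSemidef

open scoped MatrixOrder in
lemma psdSqrt_mul_self {n : Type*} [Fintype n] [DecidableEq n] {A : Matrix n n ℝ}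
    (hA : A.PosSemidef) : psdSqrt A * psdSqrt A = A := by
  rw [psdSqrt_eq hA]; exact CFC.sqrt_mul_sqrt_self A hA.nonneg

open scoped MatrixOrder in
lemma psdSqrt_unique {n : Type*} [Fintype n] [DecidableEq n] {A B : Matrix n n ℝ}
    (hA : A.PosSemidef) (hB : B.PosSemidef) (h : B * B = A) : psdSqrt A = B := by
  rw [psdSqrt_eq hA]; exact CFC.sqrt_unique h hB.nonneg

end StmtAux

/-- The largest eigenvalue of a real symmetric matrix `A`, characterized as the least
`c` with `c·I − A ⪰ 0`. -/
def lambdaMax {d : ℕ} (A : Matrix (Fin d) (Fin d) ℝ) : ℝ :=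
  sInf {c : ℝ | (c • (1 : Matrix (Fin d) (Fin d) ℝ) - A).PosSemidef}

/-- Maximizer of a linear functional over the Bures–Wasserstein ball around the
identity: `M* := (I − γ*⁻¹G)⁻²` is positive definite, lies on the boundary
`Tr(M − 2√M + I) = ρ²`, and maximizes `Tr(GM)` over the ball. -/
theorem stmt_14 {d : ℕ} (G : Matrix (Fin d) (Fin d) ℝ) (hG : G.PosSemidef) (hG0 : G ≠ 0)
    (ρ : ℝ) (hρ : 0 < ρ) (γs : ℝ) (hγmem : lambdaMax G < γs)
    (hγeq : ((((1 : Matrix (Fin d) (Fin d) ℝ) - γs⁻¹ • G)⁻¹ - 1) ^ 2).trace = ρ ^ 2)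
    (hγuniq : ∀ γ : ℝ, lambdaMax G < γ →
      ((((1 : Matrix (Fin d) (Fin d) ℝ) - γ⁻¹ • G)⁻¹ - 1) ^ 2).trace = ρ ^ 2 → γ = γs)
    (Ms : Matrix (Fin d) (Fin d) ℝ)
    (hMs : Ms = (((1 : Matrix (Fin d) (Fin d) ℝ) - γs⁻¹ • G)⁻¹) ^ 2) :
    Ms.PosDef ∧
      (Ms - (2 : ℝ) • psdSqrt Ms + 1).trace = ρ ^ 2 ∧
      ∀ M : Matrix (Fin d) (Fin d) ℝ, M.PosSemidef →
        (M - (2 : ℝ) • psdSqrt M + 1).trace ≤ ρ ^ 2 → (G * M).trace ≤ (G * Ms).trace := by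
  classical
  have hd : 0 < d := by
    rcases Nat.eq_zero_or_pos d with h | h
    · subst h
      exact absurd (Matrix.ext fun i _ => i.elim0) hG0
    · exact h
  set Sset : Set ℝ := {c : ℝ | (c • (1 : Matrix (Fin d) (Fin d) ℝ) - G).PosSemidef}
    with hSsetdef
  have hSne : Sset.Nonempty := ⟨G.trace, StmtAux.trace_smul_one_sub_posSemidef hG⟩
  have hSnn : ∀ c ∈ Sset, 0 ≤ c := by
    intro c hc
    have h1 : 0 ≤ (c • (1 : Matrix (Fin d) (Fin d) ℝ) - G).trace := StmtAux.trace_nonneg hc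
    rw [trace_sub, trace_smul, trace_one, smul_eq_mul] at h1
    have h2 : 0 ≤ G.trace := StmtAux.trace_nonneg hG
    have h3 : (0:ℝ) < (Fintype.card (Fin d) : ℝ) := by simp [hd]
    nlinarith
  have hγpos : 0 < γs := lt_of_le_of_lt (le_csInf hSne hSnn) hγmem
  obtain ⟨c, hcS, hclt⟩ := exists_lt_of_csInf_lt hSne (show sInf Sset < γs from hγmem)
  have hPpd : (γs • (1 : Matrix (Fin d) (Fin d) ℝ) - G).PosDef := by
    have heq : γs • (1 : Matrix (Fin d) (Fin d) ℝ) - G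
        = (γs - c) • (1 : Matrix (Fin d) (Fin d) ℝ) + (c • 1 - G) := by
      rw [sub_smul]; abel
    rw [heq]
    exact (StmtAux.posDef_smul Matrix.PosDef.one (by linarith)).add_posSemidef hcS
  set B : Matrix (Fin d) (Fin d) ℝ := 1 - γs⁻¹ • G with hBdef
  have hBeq : B = γs⁻¹ • (γs • (1 : Matrix (Fin d) (Fin d) ℝ) - G) := by
    rw [smul_sub, smul_smul, inv_mul_cancel₀ hγpos.ne', one_smul]
  have hBpd : B.PosDef := hBeq ▸ StmtAux.posDef_smul hPpd (inv_pos.mpr hγpos)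
  set A : Matrix (Fin d) (Fin d) ℝ := B⁻¹ with hAdef
  have hApd : A.PosDef := hBpd.inv
  have hdetB : IsUnit B.det := hBpd.det_pos.ne'.isUnit
  have hBA : B * A = 1 := mul_nonsing_inv B hdetB
  have hAB : A * B = 1 := nonsing_inv_mul B hdetB
  set P : Matrix (Fin d) (Fin d) ℝ := γs • 1 - G with hPdef
  have hPB : P = γs • B := by
    rw [hPdef, hBeq, smul_smul, mul_inv_cancel₀ hγpos.ne', one_smul]
  have hPA : P * A = γs • 1 := by rw [hPB, smul_mul_assoc, hBA]
  have hAP : A * P = γs • 1 := by rw [hPB, mul_smul_comm, hAB]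
  have hMsA : Ms = A * A := by rw [hMs, pow_two]
  have hMspd : Ms.PosDef := by
    rw [hMsA]
    refine Matrix.PosDef.of_dotProduct_mulVec_pos ?_ fun x hx => ?_
    · unfold Matrix.IsHermitian
      rw [conjTranspose_mul, hApd.1.eq]
    · have hy : A *ᵥ x ≠ 0 := by
        intro h0
        exact hx (Matrix.mulVec_injective_iff_isUnit.mpr hApd.isUnit
          (by rw [h0, Matrix.mulVec_zero]))
      have hrw : star x ⬝ᵥ (A * A) *ᵥ x = star (A *ᵥ x) ⬝ᵥ (A *ᵥ x) := by
        rw [← Matrix.mulVec_mulVec, dotProduct_mulVec, Matrix.star_mulVec, hApd.1.eq]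
      rw [hrw]
      exact dotProduct_star_self_pos_iff.mpr hy
  have hMsPSD : Ms.PosSemidef := hMspd.posSemidef
  have hsqrtMs : psdSqrt Ms = A := by
    exact StmtAux.psdSqrt_unique hMsPSD hApd.posSemidef (by rw [← hMsA])
  have hbdry : (Ms - (2:ℝ) • psdSqrt Ms + 1).trace = ρ ^ 2 := by
    rw [hsqrtMs, show Ms - (2:ℝ) • A + 1 = (A - 1)^2 by rw [hMsA, two_smul]; noncomm_ring]
    exact hγeq
  refine ⟨hMspd, hbdry, fun M hM hcon => ?_⟩
  set S : Matrix (Fin d) (Fin d) ℝ := psdSqrt M with hSdef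
  have hSpsd : S.PosSemidef := StmtAux.psdSqrt_psd hM
  have hSS : S * S = M := StmtAux.psdSqrt_mul_self hM
  have hHerm : (S - A)ᴴ = S - A := (hSpsd.1.sub hApd.1).eq
  have ht1 : 0 ≤ ((S - A) * P * (S - A)).trace := by
    have h := hPpd.posSemidef.conjTranspose_mul_mul_same (S - A)
    rw [hHerm] at h
    exact StmtAux.trace_nonneg h
  have e1 : S * P * A = γs • S := by rw [mul_assoc, hPA, mul_smul_comm, mul_one]
  have e2 : A * P * S = γs • S := by rw [hAP, smul_mul_assoc, one_mul]
  have e3 : A * P * A = γs • A := by rw [hAP, smul_mul_assoc, one_mul]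
  have expand : (S - A) * P * (S - A) = S * P * S - γs • S - γs • S + γs • A := by
    have h : (S - A) * P * (S - A) = S*P*S - S*P*A - A*P*S + A*P*A := by noncomm_ring
    rw [h, e1, e2, e3]
  have hts : (S * P * S).trace = (P * M).trace := by
    rw [Matrix.trace_mul_comm (S * P) S, ← mul_assoc, hSS, Matrix.trace_mul_comm M P]
  have htexp : 0 ≤ (P * M).trace - 2 * γs * S.trace + γs * A.trace := by
    have h := ht1
    rw [expand, trace_add, trace_sub, trace_sub, hts] at h
    simp only [trace_smul, smul_eq_mul] at h
    linarith
  have hPM : (P * M).trace = γs * M.trace - (G * M).trace := by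
    have h : P * M = γs • M - G * M := by rw [hPdef, sub_mul, smul_mul_assoc, one_mul]
    rw [h, trace_sub, trace_smul, smul_eq_mul]
  have hPMs : (G * Ms).trace = γs * Ms.trace - γs * A.trace := by
    have h1 : P * Ms = γs • A := by rw [hMsA, ← mul_assoc, hPA, smul_mul_assoc, one_mul]
    have h2 : P * Ms = γs • Ms - G * Ms := by rw [hPdef, sub_mul, smul_mul_assoc, one_mul]
    have h3 := h1.symm.trans h2
    have h4 := congrArg Matrix.trace h3
    simp only [trace_sub, trace_smul, smul_eq_mul] at h4
    linarith
  have hD : (0:ℝ) ≤ (Fintype.card (Fin d) : ℝ) := by positivity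
  have hcon' : M.trace - 2 * S.trace + (Fintype.card (Fin d) : ℝ) ≤ ρ ^ 2 := by
    have h := hcon
    rw [trace_add, trace_sub, trace_smul, trace_one, smul_eq_mul] at h
    linarith
  have hb2 : Ms.trace - 2 * A.trace + (Fintype.card (Fin d) : ℝ) = ρ ^ 2 := by
    have h := hbdry
    rw [hsqrtMs, trace_add, trace_sub, trace_smul, trace_one, smul_eq_mul] at h
    linarith
  have hmul := mul_le_mul_of_nonneg_left hcon' hγpos.le
  nlinarith [hmul, htexp, hPM, hPMs, hb2, hγpos]
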